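/- Two DAGs G and H on [n] are Markov equivalent under the *-separation criterion if and only if they are Markov equivalent under the d-separation criterion; equivalently, d-separation and *-separation induce the same Markov equivalence classes on DAGs. -/

import Mathlib

/-- A walk in the skeleton of the digraph `E`: consecutive vertices are adjacent. -/
def IsWalk {n : ℕ} (E : Fin n → Fin n → Prop) (p : List (Fin n)) : Prop :=
  p.Chain' fun a b => E a b ∨ E b a

/-- Ancestors of the set `K` (including `K` itself): vertices with a directed path
into `K`. -/
def ancSet {n : ℕ} (E : Fin n → Fin n → Prop) (K : Set (Fin n)) : Set (Fin n) :=
  {v | ∃ k ∈ K, Relation.ReflTransGen E v k}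

/-- A path (as a list of vertices) is d-connecting given `K` if it is a walk in the
skeleton, every collider on it lies in `K ∪ an(K)`, and no non-collider on it lies
in `K`. -/
def DConnecting {n : ℕ} (E : Fin n → Fin n → Prop) (K : Set (Fin n))
    (p : List (Fin n)) : Prop :=
  IsWalk E p ∧
  ∀ a b c : Fin n, [a, b, c] <:+: p →
    ((E a b ∧ E c b) → b ∈ ancSet E K) ∧ (¬(E a b ∧ E c b) → b ∉ K)

open Classical in
/-- The number of colliders on a path. -/
noncomputable def colliderCount {n : ℕ} (E : Fin n → Fin n → Prop) :
    List (Fin n) → ℕ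
  | a :: b :: c :: rest =>
      (if E a b ∧ E c b then 1 else 0) + colliderCount E (b :: c :: rest)
  | _ => 0

/-- A path is *-connecting given `K` if it is d-connecting given `K` and contains at
most one collider. -/
def StarConnecting {n : ℕ} (E : Fin n → Fin n → Prop) (K : Set (Fin n))
    (p : List (Fin n)) : Prop :=
  DConnecting E K p ∧ colliderCount E p ≤ 1

/-- `i` and `j` are d-connected given `K`. -/
def DConn {n : ℕ} (E : Fin n → Fin n → Prop) (K : Set (Fin n)) (i j : Fin n) : Prop :=
  ∃ p : List (Fin n), p.head? = some i ∧ p.getLast? = some j ∧ 2 ≤ p.length ∧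
    DConnecting E K p

/-- `i` and `j` are *-connected given `K`. -/
def StarConn {n : ℕ} (E : Fin n → Fin n → Prop) (K : Set (Fin n)) (i j : Fin n) : Prop :=
  ∃ p : List (Fin n), p.head? = some i ∧ p.getLast? = some j ∧ 2 ≤ p.length ∧
    StarConnecting E K p

/-- `K` d-separates `I` and `J`. -/
def DSep {n : ℕ} (E : Fin n → Fin n → Prop) (I J K : Set (Fin n)) : Prop :=
  ∀ i ∈ I, ∀ j ∈ J, ¬ DConn E K i j

/-- `K` *-separates `I` and `J`. -/
def StarSep {n : ℕ} (E : Fin n → Fin n → Prop) (I J K : Set (Fin n)) : Prop :=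
  ∀ i ∈ I, ∀ j ∈ J, ¬ StarConn E K i j

namespace MarkovStar

variable {n : ℕ}

/-- adjacency in the skeleton -/
def adjP (E : Fin n → Fin n → Prop) (a b : Fin n) : Prop := E a b ∨ E b a

/-- collider pattern -/
def colP (E : Fin n → Fin n → Prop) (a b c : Fin n) : Prop := E a b ∧ E c b

/-- the d-connecting condition at one triple -/
def triP (E : Fin n → Fin n → Prop) (K : Set (Fin n)) (a b c : Fin n) : Prop :=
  (colP E a b c → b ∈ ancSet E K) ∧ (¬ colP E a b c → b ∉ K)

def walkAll (E : Fin n → Fin n → Prop) (p : List (Fin n)) : Prop :=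
  ∀ (t : ℕ) (a b : Fin n), p[t]? = some a → p[t+1]? = some b → adjP E a b

def triAll (E : Fin n → Fin n → Prop) (K : Set (Fin n)) (p : List (Fin n)) : Prop :=
  ∀ (t : ℕ) (a b c : Fin n), p[t]? = some a → p[t+1]? = some b → p[t+2]? = some c →
    triP E K a b c

def connP (E : Fin n → Fin n → Prop) (K : Set (Fin n)) (p : List (Fin n)) : Prop :=
  walkAll E p ∧ triAll E K p

/- ## Bridges -/

lemma isWalk_iff {E : Fin n → Fin n → Prop} {p : List (Fin n)} :
    IsWalk E p ↔ walkAll E p := by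
  rw [IsWalk, List.Chain', List.isChain_iff_getElem]
  constructor
  · intro h t a b ha hb
    have hb' : t + 1 < p.length := by
      rcases List.getElem?_eq_some_iff.1 hb with ⟨h', _⟩; exact h'
    have := h t (by omega)
    rcases List.getElem?_eq_some_iff.1 ha with ⟨_, rfl⟩
    rcases List.getElem?_eq_some_iff.1 hb with ⟨_, rfl⟩
    simpa [adjP, List.get_eq_getElem] using this
  · intro h i hi
    have := h i p[i] p[i+1] (List.getElem?_eq_getElem (by omega))
      (List.getElem?_eq_getElem (by omega))
    simpa [adjP, List.get_eq_getElem] using this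

lemma triple_infix_iff {a b c : Fin n} {p : List (Fin n)} :
    [a, b, c] <:+: p ↔
      ∃ t : ℕ, p[t]? = some a ∧ p[t+1]? = some b ∧ p[t+2]? = some c := by
  constructor
  · rintro ⟨L, R, rfl⟩
    refine ⟨L.length, ?_, ?_, ?_⟩
    · rw [List.append_assoc, List.getElem?_append_right (le_refl _)]; simp
    · rw [List.append_assoc, List.getElem?_append_right (by omega)]
      have : L.length + 1 - L.length = 1 := by omega
      rw [this]
      show (a :: b :: c :: R)[1]? = some b
      simp
    · rw [List.append_assoc, List.getElem?_append_right (by omega)]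
      have : L.length + 2 - L.length = 2 := by omega
      rw [this]
      show (a :: b :: c :: R)[2]? = some c
      simp
  · rintro ⟨t, ha, hb, hc⟩
    have h2 : t + 2 < p.length := (List.getElem?_eq_some_iff.1 hc).1
    have hd : p.drop t = a :: b :: c :: p.drop (t+3) := by
      have e0 := List.getElem_cons_drop (as := p) (i := t) (by omega)
      have e1 := List.getElem_cons_drop (as := p) (i := (t+1)) (by omega)
      have e2 := List.getElem_cons_drop (as := p) (i := (t+2)) (by omega)
      have va : p[t] = a := by
        have := (List.getElem?_eq_some_iff.1 ha).2; exact this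
      have vb : p[t+1] = b := (List.getElem?_eq_some_iff.1 hb).2
      have vc : p[t+2] = c := (List.getElem?_eq_some_iff.1 hc).2
      rw [← e0, va, ← e1, vb, ← e2, vc]
    have hpre : [a, b, c] <+: p.drop t := ⟨p.drop (t+3), by rw [hd]; rfl⟩
    exact hpre.isInfix.trans (List.drop_suffix t p).isInfix

lemma dConnecting_iff {E : Fin n → Fin n → Prop} {K : Set (Fin n)} {p : List (Fin n)} :
    DConnecting E K p ↔ connP E K p := by
  unfold DConnecting connP
  rw [isWalk_iff]
  refine and_congr Iff.rfl ?_
  constructor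
  · intro h t a b c ha hb hc
    exact h a b c (triple_infix_iff.2 ⟨t, ha, hb, hc⟩)
  · intro h a b c hinf
    rcases triple_infix_iff.1 hinf with ⟨t, ha, hb, hc⟩
    exact h t a b c ha hb hc

/- ## acyclicity helpers -/

section Acyclic

variable {E : Fin n → Fin n → Prop} (hE : ∀ i, ¬ Relation.TransGen E i i)

include hE

lemma acy_irrefl {a : Fin n} : ¬ E a a := fun h => hE a (Relation.TransGen.single h)

lemma acy_ne {a b : Fin n} (h : E a b) : a ≠ b := by
  rintro rfl; exact acy_irrefl hE h

lemma acy2 {a b : Fin n} (h : E a b) : ¬ E b a := fun h' =>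
  hE a (Relation.TransGen.head h (Relation.TransGen.single h'))

lemma acy3 {a b c : Fin n} (h : E a b) (h' : E b c) : ¬ E c a := fun h'' =>
  hE a (Relation.TransGen.head h (Relation.TransGen.head h' (Relation.TransGen.single h'')))

lemma acy_rt {a b : Fin n} (h : E a b) (h' : Relation.ReflTransGen E b a) : False := by
  rcases Relation.reflTransGen_iff_eq_or_transGen.1 h' with rfl | htg
  · exact acy_irrefl hE h
  · exact hE a (Relation.TransGen.head h htg)

end Acyclic

/- ## ancSet helpers -/

lemma mem_anc_of_mem {E : Fin n → Fin n → Prop} {K : Set (Fin n)} {b : Fin n}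
    (hb : b ∈ K) : b ∈ ancSet E K := ⟨b, hb, Relation.ReflTransGen.refl⟩

lemma anc_step {E : Fin n → Fin n → Prop} {K : Set (Fin n)} {a b : Fin n}
    (h : E a b) (hb : b ∈ ancSet E K) : a ∈ ancSet E K := by
  rcases hb with ⟨k, hk, hr⟩
  exact ⟨k, hk, Relation.ReflTransGen.head h hr⟩

lemma anc_edge_K {E : Fin n → Fin n → Prop} {K : Set (Fin n)} {a b : Fin n}
    (h : E a b) (hb : b ∈ K) : a ∈ ancSet E K :=
  anc_step h (mem_anc_of_mem hb)

lemma anc_sub_of_sub {E : Fin n → Fin n → Prop} {K K' : Set (Fin n)}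
    (h : ∀ k ∈ K', k ∈ ancSet E K) : ancSet E K' ⊆ ancSet E K := by
  rintro v ⟨k, hk, hr⟩
  rcases h k hk with ⟨m, hm, hr'⟩
  exact ⟨m, hm, hr.trans hr'⟩

lemma anc_mono {E : Fin n → Fin n → Prop} {K K' : Set (Fin n)} (h : K ⊆ K') :
    ancSet E K ⊆ ancSet E K' := by
  rintro v ⟨k, hk, hr⟩; exact ⟨k, h hk, hr⟩

lemma anc_destruct {E : Fin n → Fin n → Prop} {K : Set (Fin n)} {b : Fin n}
    (hb : b ∈ ancSet E K) (hbK : b ∉ K) : ∃ u, E b u ∧ u ∈ ancSet E K := by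
  rcases hb with ⟨k, hk, hr⟩
  rcases Relation.ReflTransGen.cases_head hr with rfl | ⟨u, hu, hr'⟩
  · exact absurd hk hbK
  · exact ⟨u, hu, k, hk, hr'⟩

/- ## index utilities -/

lemma getElem?_mid_zero {x : Fin n} {M : List (Fin n)} {L : List (Fin n)} :
    (L ++ x :: M)[L.length]? = some x := by
  rw [List.getElem?_append_right (le_refl _)]; simp

lemma getElem?_mid {L M : List (Fin n)} {t : ℕ} (h : L.length ≤ t) :
    (L ++ M)[t]? = M[t - L.length]? := List.getElem?_append_right h

lemma getElem?_left {L M : List (Fin n)} {t : ℕ} (h : t < L.length) :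
    (L ++ M)[t]? = L[t]? := by
  rw [List.getElem?_append]; simp [h]

/-- index mapping for dropping one middle element -/
lemma map_drop1 {L R : List (Fin n)} {a b c : Fin n} (t : ℕ) :
    (t ≤ L.length → (L ++ a :: c :: R)[t]? = (L ++ a :: b :: c :: R)[t]?) ∧
    (L.length + 1 ≤ t → (L ++ a :: c :: R)[t]? = (L ++ a :: b :: c :: R)[t+1]?) := by
  constructor
  · intro ht
    rcases Nat.lt_or_ge t L.length with h | h
    · rw [getElem?_left h, getElem?_left h]
    · have : t = L.length := by omega
      subst this
      rw [getElem?_mid_zero, getElem?_mid_zero]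
  · intro ht
    obtain ⟨k, rfl⟩ : ∃ k, t = L.length + (k + 1) := ⟨t - L.length - 1, by omega⟩
    rw [getElem?_mid (by omega), getElem?_mid (by omega)]
    have e1 : L.length + (k + 1) - L.length = k + 1 := by omega
    have e2 : L.length + (k + 1) + 1 - L.length = k + 2 := by omega
    rw [e1, e2]
    simp

/-- index mapping for replacing the middle element -/
lemma map_repl {L R : List (Fin n)} {a b c u : Fin n} (t : ℕ) :
    (t ≤ L.length → (L ++ a :: u :: c :: R)[t]? = (L ++ a :: b :: c :: R)[t]?) ∧
    (L.length + 2 ≤ t → (L ++ a :: u :: c :: R)[t]? = (L ++ a :: b :: c :: R)[t]?) ∧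
    ((L ++ a :: u :: c :: R)[L.length + 1]? = some u) := by
  refine ⟨?_, ?_, ?_⟩
  · intro ht
    rcases Nat.lt_or_ge t L.length with h | h
    · rw [getElem?_left h, getElem?_left h]
    · have : t = L.length := by omega
      subst this
      rw [getElem?_mid_zero, getElem?_mid_zero]
  · intro ht
    obtain ⟨k, rfl⟩ : ∃ k, t = L.length + (k + 2) := ⟨t - L.length - 2, by omega⟩
    rw [getElem?_mid (by omega), getElem?_mid (by omega)]
    have e1 : L.length + (k + 2) - L.length = k + 2 := by omega
    rw [e1]
    simp
  · rw [getElem?_mid (by omega)]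
    have e1 : L.length + 1 - L.length = 1 := by omega
    rw [e1]
    simp

/-- index mapping for dropping two middle elements -/
lemma map_drop2 {L R : List (Fin n)} {a b : Fin n} (t : ℕ) :
    (t ≤ L.length → (L ++ a :: R)[t]? = (L ++ a :: b :: a :: R)[t]?) ∧
    (L.length + 1 ≤ t → (L ++ a :: R)[t]? = (L ++ a :: b :: a :: R)[t+2]?) := by
  constructor
  · intro ht
    rcases Nat.lt_or_ge t L.length with h | h
    · rw [getElem?_left h, getElem?_left h]
    · have : t = L.length := by omega
      subst this
      rw [getElem?_mid_zero, getElem?_mid_zero]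
  · intro ht
    obtain ⟨k, rfl⟩ : ∃ k, t = L.length + (k + 1) := ⟨t - L.length - 1, by omega⟩
    rw [getElem?_mid (by omega), getElem?_mid (by omega)]
    have e1 : L.length + (k + 1) - L.length = k + 1 := by omega
    have e2 : L.length + (k + 1) + 2 - L.length = k + 3 := by omega
    rw [e1, e2]
    simp

/- ## boundary element helpers -/

lemma getLast?_pos {L : List (Fin n)} {x : Fin n} (h : L.getLast? = some x) :
    1 ≤ L.length ∧ L[L.length - 1]? = some x := by
  cases L with
  | nil => simp at h
  | cons z M =>
    refine ⟨by simp, ?_⟩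
    rw [← List.getLast?_eq_getElem?]
    exact h

lemma getLast?_of_getElem {L : List (Fin n)} {x : Fin n}
    (h1 : 1 ≤ L.length) (h : L[L.length - 1]? = some x) : L.getLast? = some x := by
  rw [List.getLast?_eq_getElem?]
  exact h

lemma head?_of_getElem {R : List (Fin n)} {y : Fin n} (h : R[0]? = some y) :
    R.head? = some y := by
  rw [List.head?_eq_getElem?]; exact h

section Surgery

variable {E : Fin n → Fin n → Prop} {K : Set (Fin n)} {L R : List (Fin n)}
  {a b c u : Fin n}

/-- facts about the original decomposed list -/
lemma P_facts (L : List (Fin n)) (a b c : Fin n) (R : List (Fin n)) :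
    (L ++ a :: b :: c :: R)[L.length]? = some a ∧
    (L ++ a :: b :: c :: R)[L.length + 1]? = some b ∧
    (L ++ a :: b :: c :: R)[L.length + 2]? = some c := by
  refine ⟨getElem?_mid_zero, ?_, ?_⟩
  · rw [getElem?_mid (by omega)]
    have e : L.length + 1 - L.length = 1 := by omega
    rw [e]; simp
  · rw [getElem?_mid (by omega)]
    have e : L.length + 2 - L.length = 2 := by omega
    rw [e]; simp

lemma conn_drop1
    (h : connP E K (L ++ a :: b :: c :: R))
    (hac : adjP E a c)
    (hx : ∀ x, L.getLast? = some x → triP E K x a b → triP E K x a c)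
    (hy : ∀ y, R.head? = some y → triP E K b c y → triP E K a c y) :
    connP E K (L ++ a :: c :: R) := by
  obtain ⟨hw, ht⟩ := h
  obtain ⟨Pa, Pb, Pc⟩ := P_facts L a b c R
  have md := fun (s : ℕ) => map_drop1 (L:=L) (R:=R) (a:=a) (b:=b) (c:=c) s
  have Na : (L ++ a :: c :: R)[L.length]? = some a := getElem?_mid_zero
  constructor
  · intro t x y hxg hyg
    rcases show t + 1 ≤ L.length ∨ t = L.length ∨ L.length + 1 ≤ t by omega with h1 | h1 | h1
    · rw [(md t).1 (by omega)] at hxg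
      rw [(md (t+1)).1 (by omega)] at hyg
      exact hw t x y hxg hyg
    · rw [h1, Na] at hxg
      rw [(md (t+1)).2 (by omega)] at hyg
      rw [show t + 1 + 1 = L.length + 2 by omega, Pc] at hyg
      obtain rfl : a = x := Option.some.inj hxg
      obtain rfl : c = y := Option.some.inj hyg
      exact hac
    · rw [(md t).2 (by omega)] at hxg
      rw [(md (t+1)).2 (by omega)] at hyg
      exact hw (t+1) x y hxg hyg
  · intro t x y z hxg hyg hzg
    rcases show t + 2 ≤ L.length ∨ t + 2 = L.length + 1 ∨ t = L.length ∨
        L.length + 1 ≤ t by omega with h1 | h1 | h1 | h1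
    · rw [(md t).1 (by omega)] at hxg
      rw [(md (t+1)).1 (by omega)] at hyg
      rw [(md (t+2)).1 (by omega)] at hzg
      exact ht t x y z hxg hyg hzg
    · -- new triple (x, a, c) at t = L.length - 1
      rw [(md t).1 (by omega)] at hxg
      rw [(md (t+1)).1 (by omega)] at hyg
      rw [(md (t+2)).2 (by omega)] at hzg
      rw [show t + 1 = L.length by omega, Pa] at hyg
      rw [show t + 2 + 1 = L.length + 2 by omega, Pc] at hzg
      obtain rfl : a = y := Option.some.inj hyg
      obtain rfl : c = z := Option.some.inj hzg
      have hLx : L.getLast? = some x := by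
        apply getLast?_of_getElem (by omega)
        rw [show L.length - 1 = t by omega,
          ← getElem?_left (L := L) (M := a :: b :: c :: R) (by omega)]
        exact hxg
      have hPb : (L ++ a :: b :: c :: R)[t + 2]? = some b := by
        rw [show t + 2 = L.length + 1 by omega]; exact Pb
      have hPa : (L ++ a :: b :: c :: R)[t + 1]? = some a := by
        rw [show t + 1 = L.length by omega]; exact Pa
      exact hx x hLx (ht t x a b hxg hPa hPb)
    · -- new triple (a, c, z) at t = L.length
      rw [h1, Na] at hxg
      rw [(md (t+1)).2 (by omega)] at hyg
      rw [show t + 1 + 1 = L.length + 2 by omega, Pc] at hyg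
      rw [(md (t+2)).2 (by omega)] at hzg
      obtain rfl : a = x := Option.some.inj hxg
      obtain rfl : c = y := Option.some.inj hyg
      have hRz : R.head? = some z := by
        apply head?_of_getElem
        rw [← show (L ++ a :: b :: c :: R)[t + 2 + 1]? = R[0]? by
          rw [getElem?_mid (by omega), show t + 2 + 1 - L.length = 3 by omega]; simp]
        exact hzg
      have hPz : (L ++ a :: b :: c :: R)[t + 1 + 2]? = some z := by
        rw [show t + 1 + 2 = t + 2 + 1 by omega]; exact hzg
      exact hy z hRz (ht (t+1) b c z (by rw [show t + 1 = L.length + 1 by omega]; exact Pb)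
        (by rw [show t + 1 + 1 = L.length + 2 by omega]; exact Pc) hPz)
    · rw [(md t).2 (by omega)] at hxg
      rw [(md (t+1)).2 (by omega)] at hyg
      rw [(md (t+2)).2 (by omega)] at hzg
      exact ht (t+1) x y z hxg hyg hzg

lemma conn_repl
    (h : connP E K (L ++ a :: b :: c :: R))
    (hau : adjP E a u) (huc : adjP E u c)
    (hmid : triP E K a u c)
    (hx : ∀ x, L.getLast? = some x → triP E K x a b → triP E K x a u)
    (hy : ∀ y, R.head? = some y → triP E K b c y → triP E K u c y) :
    connP E K (L ++ a :: u :: c :: R) := by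
  obtain ⟨hw, ht⟩ := h
  obtain ⟨Pa, Pb, Pc⟩ := P_facts L a b c R
  obtain ⟨Na, Nu, Nc⟩ := P_facts L a u c R
  have md := fun (s : ℕ) => map_repl (L:=L) (R:=R) (a:=a) (b:=b) (c:=c) (u:=u) s
  constructor
  · intro t x y hxg hyg
    rcases show t + 1 ≤ L.length ∨ t = L.length ∨ t = L.length + 1 ∨
        L.length + 2 ≤ t by omega with h1 | h1 | h1 | h1
    · rw [(md t).1 (by omega)] at hxg
      rw [(md (t+1)).1 (by omega)] at hyg
      exact hw t x y hxg hyg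
    · rw [h1, Na] at hxg
      rw [show t + 1 = L.length + 1 by omega, Nu] at hyg
      obtain rfl : a = x := Option.some.inj hxg
      obtain rfl : u = y := Option.some.inj hyg
      exact hau
    · rw [h1, Nu] at hxg
      rw [show t + 1 = L.length + 2 by omega, Nc] at hyg
      obtain rfl : u = x := Option.some.inj hxg
      obtain rfl : c = y := Option.some.inj hyg
      exact huc
    · rw [(md t).2.1 (by omega)] at hxg
      rw [(md (t+1)).2.1 (by omega)] at hyg
      exact hw t x y hxg hyg
  · intro t x y z hxg hyg hzg
    rcases show t + 2 ≤ L.length ∨ t + 2 = L.length + 1 ∨ t = L.length ∨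
        t = L.length + 1 ∨ L.length + 2 ≤ t by omega with h1 | h1 | h1 | h1 | h1
    · rw [(md t).1 (by omega)] at hxg
      rw [(md (t+1)).1 (by omega)] at hyg
      rw [(md (t+2)).1 (by omega)] at hzg
      exact ht t x y z hxg hyg hzg
    · -- new triple (x, a, u)
      rw [(md t).1 (by omega)] at hxg
      rw [(md (t+1)).1 (by omega)] at hyg
      rw [show t + 2 = L.length + 1 by omega, Nu] at hzg
      rw [show t + 1 = L.length by omega, Pa] at hyg
      obtain rfl : a = y := Option.some.inj hyg
      obtain rfl : u = z := Option.some.inj hzg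
      have hLx : L.getLast? = some x := by
        apply getLast?_of_getElem (by omega)
        rw [show L.length - 1 = t by omega,
          ← getElem?_left (L := L) (M := a :: b :: c :: R) (by omega)]
        exact hxg
      have hPa : (L ++ a :: b :: c :: R)[t + 1]? = some a := by
        rw [show t + 1 = L.length by omega]; exact Pa
      have hPb : (L ++ a :: b :: c :: R)[t + 2]? = some b := by
        rw [show t + 2 = L.length + 1 by omega]; exact Pb
      exact hx x hLx (ht t x a b hxg hPa hPb)
    · -- new triple (a, u, c)
      rw [h1, Na] at hxg
      rw [show t + 1 = L.length + 1 by omega, Nu] at hyg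
      rw [show t + 2 = L.length + 2 by omega, Nc] at hzg
      obtain rfl : a = x := Option.some.inj hxg
      obtain rfl : u = y := Option.some.inj hyg
      obtain rfl : c = z := Option.some.inj hzg
      exact hmid
    · -- new triple (u, c, z)
      rw [h1, Nu] at hxg
      rw [show t + 1 = L.length + 2 by omega, Nc] at hyg
      rw [(md (t+2)).2.1 (by omega)] at hzg
      obtain rfl : u = x := Option.some.inj hxg
      obtain rfl : c = y := Option.some.inj hyg
      have hRz : R.head? = some z := by
        apply head?_of_getElem
        rw [← show (L ++ a :: b :: c :: R)[t + 2]? = R[0]? by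
          rw [getElem?_mid (by omega), show t + 2 - L.length = 3 by omega]; simp]
        exact hzg
      have hPz : (L ++ a :: b :: c :: R)[L.length + 1 + 2]? = some z := by
        rw [show L.length + 1 + 2 = t + 2 by omega]; exact hzg
      exact hy z hRz (ht (L.length + 1) b c z Pb Pc hPz)
    · rw [(md t).2.1 (by omega)] at hxg
      rw [(md (t+1)).2.1 (by omega)] at hyg
      rw [(md (t+2)).2.1 (by omega)] at hzg
      exact ht t x y z hxg hyg hzg

lemma conn_drop2
    (h : connP E K (L ++ a :: b :: a :: R))
    (hxy : ∀ x y, L.getLast? = some x → R.head? = some y →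
      triP E K x a b → triP E K b a y → triP E K x a y) :
    connP E K (L ++ a :: R) := by
  obtain ⟨hw, ht⟩ := h
  obtain ⟨Pa, Pb, Pa2⟩ := P_facts L a b a R
  have md := fun (s : ℕ) => map_drop2 (L:=L) (R:=R) (a:=a) (b:=b) s
  have Na : (L ++ a :: R)[L.length]? = some a := getElem?_mid_zero
  constructor
  · intro t x y hxg hyg
    rcases show t + 1 ≤ L.length ∨ t = L.length ∨ L.length + 1 ≤ t by omega
      with h1 | h1 | h1
    · rw [(md t).1 (by omega)] at hxg
      rw [(md (t+1)).1 (by omega)] at hyg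
      exact hw t x y hxg hyg
    · rw [h1, Na] at hxg
      rw [(md (t+1)).2 (by omega)] at hyg
      obtain rfl : a = x := Option.some.inj hxg
      have hPa2 : (L ++ a :: b :: a :: R)[t + 1 + 2 - 1]? = some a := by
        rw [show t + 1 + 2 - 1 = L.length + 2 by omega]; exact Pa2
      exact hw (t + 1 + 2 - 1) a y (by rw [show t+1+2-1 = t+1+1 by omega] at hPa2 ⊢; exact hPa2) (by rw [show t+1+2 = t+1+1+1 by omega] at hyg; exact hyg)
    · rw [(md t).2 (by omega)] at hxg
      rw [(md (t+1)).2 (by omega)] at hyg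
      exact hw (t+2) x y hxg (by rw [show t+1+2 = t+2+1 by omega] at hyg; exact hyg)
  · intro t x y z hxg hyg hzg
    rcases show t + 2 ≤ L.length ∨ t + 2 = L.length + 1 ∨ t = L.length ∨
        L.length + 1 ≤ t by omega with h1 | h1 | h1 | h1
    · rw [(md t).1 (by omega)] at hxg
      rw [(md (t+1)).1 (by omega)] at hyg
      rw [(md (t+2)).1 (by omega)] at hzg
      exact ht t x y z hxg hyg hzg
    · -- new triple (x, a, z) with z the old head of R
      rw [(md t).1 (by omega)] at hxg
      rw [(md (t+1)).1 (by omega)] at hyg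
      rw [(md (t+2)).2 (by omega)] at hzg
      rw [show t + 1 = L.length by omega, Pa] at hyg
      obtain rfl : a = y := Option.some.inj hyg
      have hLx : L.getLast? = some x := by
        apply getLast?_of_getElem (by omega)
        rw [show L.length - 1 = t by omega,
          ← getElem?_left (L := L) (M := a :: b :: a :: R) (by omega)]
        exact hxg
      have hRz : R.head? = some z := by
        apply head?_of_getElem
        rw [← show (L ++ a :: b :: a :: R)[t + 2 + 2]? = R[0]? by
          rw [getElem?_mid (by omega), show t + 2 + 2 - L.length = 3 by omega]; simp]
        exact hzg
      have hPa : (L ++ a :: b :: a :: R)[t + 1]? = some a := by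
        rw [show t + 1 = L.length by omega]; exact Pa
      have hPb : (L ++ a :: b :: a :: R)[t + 2]? = some b := by
        rw [show t + 2 = L.length + 1 by omega]; exact Pb
      have hPa2 : (L ++ a :: b :: a :: R)[L.length + 1 + 1]? = some a := by
        rw [show L.length + 1 + 1 = L.length + 2 by omega]; exact Pa2
      have hPz : (L ++ a :: b :: a :: R)[L.length + 1 + 2]? = some z := by
        rw [show L.length + 1 + 2 = t + 2 + 2 by omega]; exact hzg
      exact hxy x z hLx hRz (ht t x a b hxg hPa hPb)
        (ht (L.length + 1) b a z (by rw [show L.length + 1 = t + 2 by omega]; exact hPb)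
          hPa2 hPz)
    · -- shifted triple starting at old position L.length + 2
      rw [h1, Na] at hxg
      rw [(md (t+1)).2 (by omega)] at hyg
      rw [(md (t+2)).2 (by omega)] at hzg
      obtain rfl : a = x := Option.some.inj hxg
      have e1 : (L ++ a :: b :: a :: R)[L.length + 2]? = some a := Pa2
      exact ht (L.length + 2) a y z e1
        (by rw [show L.length + 2 + 1 = t + 1 + 2 by omega]; exact hyg)
        (by rw [show L.length + 2 + 2 = t + 2 + 2 by omega]; exact hzg)
    · rw [(md t).2 (by omega)] at hxg
      rw [(md (t+1)).2 (by omega)] at hyg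
      rw [(md (t+2)).2 (by omega)] at hzg
      exact ht (t+2) x y z hxg
        (by rw [show t + 2 + 1 = t + 1 + 2 by omega]; exact hyg)
        (by rw [show t + 2 + 2 = t + 2 + 2 by omega]; exact hzg)

end Surgery

/- ## collider count lemmas -/

section Count

open Classical

variable {E F : Fin n → Fin n → Prop} {K : Set (Fin n)}

lemma count_nil : colliderCount E ([] : List (Fin n)) = 0 := rfl
lemma count_one (x : Fin n) : colliderCount E [x] = 0 := rfl
lemma count_two (x y : Fin n) : colliderCount E [x, y] = 0 := rfl

lemma count_cons₃ (x y z : Fin n) (M : List (Fin n)) :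
    colliderCount E (x :: y :: z :: M) =
      (if E x y ∧ E z y then 1 else 0) + colliderCount E (y :: z :: M) := rfl

lemma count_cons_cons {M : List (Fin n)} {z : Fin n} (x y : Fin n)
    (hz : M.head? = some z) :
    colliderCount E (x :: y :: M) =
      (if E x y ∧ E z y then 1 else 0) + colliderCount E (y :: M) := by
  cases M with
  | nil => simp at hz
  | cons w M' =>
    obtain rfl : w = z := by injection hz
    rfl

lemma head?_shared (X : List (Fin n)) (p q : Fin n) (Y : List (Fin n)) :
    (X ++ p :: q :: Y).head? = (X ++ [p, q]).head? := by
  cases X <;> simp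

lemma count_split (X : List (Fin n)) (p q : Fin n) (Y : List (Fin n)) :
    colliderCount E (X ++ p :: q :: Y) =
      colliderCount E (X ++ [p, q]) + colliderCount E (p :: q :: Y) := by
  induction X with
  | nil => simp [count_two]
  | cons x X ih =>
    cases X with
    | nil =>
      cases Y with
      | nil => simp [count_cons₃, count_two]
      | cons y Y' =>
        simp only [List.nil_append, List.cons_append, count_cons₃, count_two]
        omega
    | cons x' X' =>
      have hz : ∃ z, (X' ++ p :: q :: Y).head? = some z := by
        cases X' <;> exact ⟨_, rfl⟩
      obtain ⟨z, hz⟩ := hz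
      have hz' : (X' ++ [p, q]).head? = some z := by
        rw [← head?_shared X' p q Y]; exact hz
      have e1 : colliderCount E (x :: x' :: (X' ++ p :: q :: Y)) =
          (if E x x' ∧ E z x' then 1 else 0) +
            colliderCount E (x' :: (X' ++ p :: q :: Y)) :=
        count_cons_cons x x' hz
      have e2 : colliderCount E (x :: x' :: (X' ++ [p, q])) =
          (if E x x' ∧ E z x' then 1 else 0) +
            colliderCount E (x' :: (X' ++ [p, q])) :=
        count_cons_cons x x' hz'
      simp only [List.cons_append] at ih e1 e2 ⊢
      omega

/-- count over `(L' ++ [x]) ++ [p, q]` in boundary form -/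
lemma cnt2_concat (L' : List (Fin n)) (x p q : Fin n) :
    colliderCount E ((L' ++ [x]) ++ [p, q]) =
      colliderCount E (L' ++ [x, p]) + (if E x p ∧ E q p then 1 else 0) := by
  have h := count_split (E := E) L' x p [q]
  simp only [List.append_assoc, List.cons_append, List.nil_append] at h ⊢
  rw [h, count_cons₃]
  simp [count_two]

lemma count_le_count_of_imp {p : List (Fin n)}
    (h : ∀ (t : ℕ) (a b c : Fin n), p[t]? = some a → p[t+1]? = some b →
      p[t+2]? = some c → (F a b ∧ F c b) → (E a b ∧ E c b)) :
    colliderCount F p ≤ colliderCount E p := by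
  induction p with
  | nil => simp [count_nil]
  | cons a q ih =>
    match q with
    | [] => simp [count_one]
    | [y] => simp [count_two]
    | y :: z :: M =>
      have h0 := h 0 a y z (by simp) (by simp) (by simp)
      have ih' : colliderCount F (y :: z :: M) ≤ colliderCount E (y :: z :: M) := by
        apply ih
        intro t a' b' c' h1 h2 h3
        exact h (t+1) a' b' c' (by simpa using h1) (by simpa using h2) (by simpa using h3)
      rw [count_cons₃, count_cons₃]
      by_cases hc : F a y ∧ F z y
      · rw [if_pos hc, if_pos (h0 hc)]
        omega
      · rw [if_neg hc]
        have hb : (if E a y ∧ E z y then (1:ℕ) else 0) ≤ 1 := by split <;> omega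
        omega

end Count

section CountSurgery

open Classical

variable {E : Fin n → Fin n → Prop} {L R : List (Fin n)} {a b c u : Fin n}

lemma count_drop1_le
    (hmid : ¬ (E a b ∧ E c b))
    (hA : ∀ x, L.getLast? = some x → (E x a ∧ E c a) → (E x a ∧ E b a))
    (hB : ∀ y, R.head? = some y → (E a c ∧ E y c) → (E b c ∧ E y c)) :
    colliderCount E (L ++ a :: c :: R) ≤ colliderCount E (L ++ a :: b :: c :: R) := by
  have eP : colliderCount E (L ++ a :: b :: c :: R) =
      colliderCount E (L ++ [a, b]) + ((if E a b ∧ E c b then 1 else 0) +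
        colliderCount E (b :: c :: R)) := by
    rw [count_split L a b (c :: R), count_cons₃]
  have eN : colliderCount E (L ++ a :: c :: R) =
      colliderCount E (L ++ [a, c]) + colliderCount E (a :: c :: R) :=
    count_split L a c R
  have hL : colliderCount E (L ++ [a, c]) ≤ colliderCount E (L ++ [a, b]) := by
    rcases L.eq_nil_or_concat with rfl | ⟨L', x, rfl⟩
    · simp [count_two]
    · rw [List.concat_eq_append] at hA ⊢
      rw [cnt2_concat, cnt2_concat]
      have hlast : (L' ++ [x]).getLast? = some x := by simp
      by_cases hxa : E x a ∧ E c a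
      · rw [if_pos hxa, if_pos (hA x hlast hxa)]
      · rw [if_neg hxa]
        have : (if E x a ∧ E b a then (1:ℕ) else 0) ≥ 0 := by positivity
        omega
  have hR : colliderCount E (a :: c :: R) ≤ colliderCount E (b :: c :: R) := by
    cases R with
    | nil => simp [count_two]
    | cons y R' =>
      rw [count_cons₃, count_cons₃]
      have hhead : (y :: R').head? = some y := rfl
      by_cases hacy : E a c ∧ E y c
      · rw [if_pos hacy, if_pos (hB y hhead hacy)]
      · rw [if_neg hacy]
        have : (if E b c ∧ E y c then (1:ℕ) else 0) ≥ 0 := by positivity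
        omega
  rw [if_neg hmid] at eP
  omega

lemma count_drop1_one
    (hmid : E a b ∧ E c b)
    (hC : ∀ x y, L.getLast? = some x → R.head? = some y →
      ¬ ((E x a ∧ E c a) ∧ (E a c ∧ E y c)))
    (h1 : colliderCount E (L ++ a :: b :: c :: R) ≤ 1) :
    colliderCount E (L ++ a :: c :: R) ≤ 1 := by
  have eP : colliderCount E (L ++ a :: b :: c :: R) =
      colliderCount E (L ++ [a, b]) + ((if E a b ∧ E c b then 1 else 0) +
        colliderCount E (b :: c :: R)) := by
    rw [count_split L a b (c :: R), count_cons₃]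
  rw [if_pos hmid] at eP
  have hCL : colliderCount E (L ++ [a, b]) = 0 := by omega
  have hCR : colliderCount E (b :: c :: R) = 0 := by omega
  have eN : colliderCount E (L ++ a :: c :: R) =
      colliderCount E (L ++ [a, c]) + colliderCount E (a :: c :: R) :=
    count_split L a c R
  rcases L.eq_nil_or_concat with rfl | ⟨L', x, rfl⟩
  · have hnil : colliderCount E (([] : List (Fin n)) ++ [a, c]) = 0 := by simp [count_two]
    cases R with
    | nil => rw [eN, hnil]; simp [count_two]
    | cons y R' =>
      have hR0 : colliderCount E (c :: y :: R') = 0 := by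
        rw [count_cons₃] at hCR
        omega
      rw [eN, hnil, count_cons₃, hR0]
      split <;> omega
  · rw [List.concat_eq_append] at *
    have hlast : (L' ++ [x]).getLast? = some x := by simp
    have eCL : colliderCount E ((L' ++ [x]) ++ [a, b]) =
        colliderCount E (L' ++ [x, a]) + (if E x a ∧ E b a then 1 else 0) :=
      cnt2_concat L' x a b
    have hxa0 : colliderCount E (L' ++ [x, a]) = 0 := by
      rw [eCL] at hCL
      omega
    have eCL' : colliderCount E ((L' ++ [x]) ++ [a, c]) =
        colliderCount E (L' ++ [x, a]) + (if E x a ∧ E c a then 1 else 0) :=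
      cnt2_concat L' x a c
    cases R with
    | nil =>
      rw [eN, eCL', hxa0]
      simp [count_two]
      split <;> omega
    | cons y R' =>
      have hR0 : colliderCount E (c :: y :: R') = 0 := by
        rw [count_cons₃] at hCR
        omega
      rw [eN, eCL', hxa0, count_cons₃, hR0]
      have hhead : (y :: R').head? = some y := rfl
      by_cases h2 : E x a ∧ E c a
      · have h3 : ¬ (E a c ∧ E y c) := fun h4 => hC x y hlast hhead ⟨h2, h4⟩
        rw [if_pos h2, if_neg h3]
      · rw [if_neg h2]
        split <;> omega

lemma count_repl_le
    (hm : (E a u ∧ E c u) → (E a b ∧ E c b))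
    (hA : ∀ x, L.getLast? = some x → (E x a ∧ E u a) → (E x a ∧ E b a))
    (hB : ∀ y, R.head? = some y → (E u c ∧ E y c) → (E b c ∧ E y c)) :
    colliderCount E (L ++ a :: u :: c :: R) ≤ colliderCount E (L ++ a :: b :: c :: R) := by
  have eP : colliderCount E (L ++ a :: b :: c :: R) =
      colliderCount E (L ++ [a, b]) + ((if E a b ∧ E c b then 1 else 0) +
        colliderCount E (b :: c :: R)) := by
    rw [count_split L a b (c :: R), count_cons₃]
  have eN : colliderCount E (L ++ a :: u :: c :: R) =
      colliderCount E (L ++ [a, u]) + ((if E a u ∧ E c u then 1 else 0) +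
        colliderCount E (u :: c :: R)) := by
    rw [count_split L a u (c :: R), count_cons₃]
  have hmi : (if E a u ∧ E c u then (1:ℕ) else 0) ≤ (if E a b ∧ E c b then 1 else 0) := by
    by_cases h2 : E a u ∧ E c u
    · rw [if_pos h2, if_pos (hm h2)]
    · rw [if_neg h2]; positivity
  have hL : colliderCount E (L ++ [a, u]) ≤ colliderCount E (L ++ [a, b]) := by
    rcases L.eq_nil_or_concat with rfl | ⟨L', x, rfl⟩
    · simp [count_two]
    · rw [List.concat_eq_append] at hA ⊢
      rw [cnt2_concat, cnt2_concat]
      have hlast : (L' ++ [x]).getLast? = some x := by simp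
      by_cases hxa : E x a ∧ E u a
      · rw [if_pos hxa, if_pos (hA x hlast hxa)]
      · rw [if_neg hxa]
        have : (if E x a ∧ E b a then (1:ℕ) else 0) ≥ 0 := by positivity
        omega
  have hR : colliderCount E (u :: c :: R) ≤ colliderCount E (b :: c :: R) := by
    cases R with
    | nil => simp [count_two]
    | cons y R' =>
      rw [count_cons₃, count_cons₃]
      have hhead : (y :: R').head? = some y := rfl
      by_cases hucy : E u c ∧ E y c
      · rw [if_pos hucy, if_pos (hB y hhead hucy)]
      · rw [if_neg hucy]
        have : (if E b c ∧ E y c then (1:ℕ) else 0) ≥ 0 := by positivity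
        omega
  omega

lemma count_drop2_le
    (hD : ∀ x y, L.getLast? = some x → R.head? = some y → (E x a ∧ E y a) →
      ((E x a ∧ E b a) ∨ (E a b ∧ E a b) ∨ (E b a ∧ E y a))) :
    colliderCount E (L ++ a :: R) ≤ colliderCount E (L ++ a :: b :: a :: R) := by
  have eP : colliderCount E (L ++ a :: b :: a :: R) =
      colliderCount E (L ++ [a, b]) + ((if E a b ∧ E a b then 1 else 0) +
        colliderCount E (b :: a :: R)) := by
    rw [count_split L a b (a :: R), count_cons₃]
  rcases L.eq_nil_or_concat with rfl | ⟨L', x, rfl⟩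
  · cases R with
    | nil => simp [count_one]
    | cons y R' =>
      have eR : colliderCount E (b :: a :: y :: R') =
          (if E b a ∧ E y a then 1 else 0) + colliderCount E (a :: y :: R') :=
        count_cons₃ b a y R'
      simp only [List.nil_append] at *
      rw [eP, eR]
      have : colliderCount E (a :: y :: R') ≤ colliderCount E (a :: y :: R') := le_refl _
      omega
  · rw [List.concat_eq_append] at *
    have hlast : (L' ++ [x]).getLast? = some x := by simp
    have eCL : colliderCount E ((L' ++ [x]) ++ [a, b]) =
        colliderCount E (L' ++ [x, a]) + (if E x a ∧ E b a then 1 else 0) :=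
      cnt2_concat L' x a b
    cases R with
    | nil =>
      have eN : (L' ++ [x]) ++ a :: ([] : List (Fin n)) = L' ++ x :: a :: ([] : List (Fin n)) := by simp
      have eN2 : colliderCount E (L' ++ x :: a :: ([] : List (Fin n))) =
          colliderCount E (L' ++ [x, a]) + colliderCount E (x :: a :: ([] : List (Fin n))) :=
        count_split L' x a ([] : List (Fin n))
      rw [eN, eN2, eP, eCL]
      simp [count_two]
      omega
    | cons y R' =>
      have eN : colliderCount E ((L' ++ [x]) ++ a :: y :: R') =
          colliderCount E ((L' ++ [x]) ++ [a, y]) + colliderCount E (a :: y :: R') :=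
        count_split (L' ++ [x]) a y R'
      have eCL' : colliderCount E ((L' ++ [x]) ++ [a, y]) =
          colliderCount E (L' ++ [x, a]) + (if E x a ∧ E y a then 1 else 0) :=
        cnt2_concat L' x a y
      have eR : colliderCount E (b :: a :: y :: R') =
          (if E b a ∧ E y a then 1 else 0) + colliderCount E (a :: y :: R') :=
        count_cons₃ b a y R'
      rw [eN, eCL', eP, eCL, eR]
      have hhead : (y :: R').head? = some y := rfl
      by_cases hxy : E x a ∧ E y a
      · rcases hD x y hlast hhead hxy with h | h | h
        · rw [if_pos hxy, if_pos h]
          omega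
        · rw [if_pos hxy, if_pos h]
          omega
        · rw [if_pos hxy, if_pos h]
          omega
      · rw [if_neg hxy]
        have b1 : (if E x a ∧ E b a then (1:ℕ) else 0) ≥ 0 := by positivity
        omega

end CountSurgery

/- ## decomposition helpers -/

section Decomp

variable {E : Fin n → Fin n → Prop} {K : Set (Fin n)} {L R : List (Fin n)}
  {a b c x y : Fin n} {p : List (Fin n)} {t : ℕ}

lemma decomp_triple (h1 : p[t]? = some a) (h2 : p[t+1]? = some b)
    (h3 : p[t+2]? = some c) :
    ∃ L R : List (Fin n), p = L ++ a :: b :: c :: R ∧ L.length = t := by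
  have hlt : t + 2 < p.length := (List.getElem?_eq_some_iff.1 h3).1
  refine ⟨p.take t, p.drop (t+3), ?_, ?_⟩
  · have hd : p.drop t = a :: b :: c :: p.drop (t+3) := by
      have e0 := List.getElem_cons_drop (as := p) (i := t) (by omega)
      have e1 := List.getElem_cons_drop (as := p) (i := (t+1)) (by omega)
      have e2 := List.getElem_cons_drop (as := p) (i := (t+2)) (by omega)
      have va : p[t] = a := (List.getElem?_eq_some_iff.1 h1).2
      have vb : p[t+1] = b := (List.getElem?_eq_some_iff.1 h2).2
      have vc : p[t+2] = c := (List.getElem?_eq_some_iff.1 h3).2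
      rw [← e0, va, ← e1, vb, ← e2, vc]
    conv_lhs => rw [← List.take_append_drop t p]
    rw [hd]
  · rw [List.length_take]
    omega

lemma idx_left (hLx : L.getLast? = some x) :
    1 ≤ L.length ∧
    (L ++ a :: b :: c :: R)[L.length - 1]? = some x ∧
    (L ++ a :: b :: c :: R)[(L.length - 1) + 1]? = some a ∧
    (L ++ a :: b :: c :: R)[(L.length - 1) + 2]? = some b := by
  obtain ⟨h1, h2⟩ := getLast?_pos hLx
  obtain ⟨Pa, Pb, _⟩ := P_facts L a b c R
  refine ⟨h1, ?_, ?_, ?_⟩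
  · rw [getElem?_left (by omega)]; exact h2
  · rw [show L.length - 1 + 1 = L.length by omega]; exact Pa
  · rw [show L.length - 1 + 2 = L.length + 1 by omega]; exact Pb

lemma idx_right (hRy : R.head? = some y) :
    (L ++ a :: b :: c :: R)[L.length + 1]? = some b ∧
    (L ++ a :: b :: c :: R)[(L.length + 1) + 1]? = some c ∧
    (L ++ a :: b :: c :: R)[(L.length + 1) + 2]? = some y := by
  obtain ⟨_, Pb, Pc⟩ := P_facts L a b c R
  refine ⟨Pb, ?_, ?_⟩
  · rw [show L.length + 1 + 1 = L.length + 2 by omega]; exact Pc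
  · rw [getElem?_mid (by omega), show L.length + 1 + 2 - L.length = 3 by omega]
    simp [← List.head?_eq_getElem?]
    exact hRy

lemma neighbor_left (ht : triAll E K (L ++ a :: b :: c :: R))
    (hLx : L.getLast? = some x) : triP E K x a b := by
  obtain ⟨_, i1, i2, i3⟩ := idx_left (a := a) (b := b) (c := c) (R := R) hLx
  exact ht _ x a b i1 i2 i3

lemma neighbor_right (ht : triAll E K (L ++ a :: b :: c :: R))
    (hRy : R.head? = some y) : triP E K b c y := by
  obtain ⟨i1, i2, i3⟩ := idx_right (a := a) (b := b) (c := c) (L := L) hRy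
  exact ht _ b c y i1 i2 i3

lemma head?_pres (L : List (Fin n)) (x : Fin n) (M M' : List (Fin n)) :
    (L ++ x :: M).head? = (L ++ x :: M').head? := by
  cases L <;> simp

lemma last?_pres (L : List (Fin n)) {M M' : List (Fin n)}
    (h : M.getLast? = M'.getLast?) :
    (L ++ M).getLast? = (L ++ M').getLast? := by
  rw [List.getLast?_append, List.getLast?_append, h]

lemma last?_drop1 : (a :: c :: R).getLast? = (a :: b :: c :: R).getLast? := by
  simp [List.getLast?_cons_cons]

lemma last?_repl {u : Fin n} :
    (a :: u :: c :: R).getLast? = (a :: b :: c :: R).getLast? := by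
  simp [List.getLast?_cons_cons]

lemma last?_drop2 : (a :: R).getLast? = (a :: b :: a :: R).getLast? := by
  cases R <;> simp [List.getLast?_cons_cons]

end Decomp

/- ## distance to K machinery -/

section Dist

variable {E : Fin n → Fin n → Prop} {K : Set (Fin n)} {v w : Fin n}

def reachN (E : Fin n → Fin n → Prop) (K : Set (Fin n)) : ℕ → Fin n → Prop
  | 0 => fun v => v ∈ K
  | (m+1) => fun v => v ∈ K ∨ ∃ w, E v w ∧ reachN E K m w

lemma anc_iff_reachN : v ∈ ancSet E K ↔ ∃ m, reachN E K m v := by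
  constructor
  · rintro ⟨k, hk, hr⟩
    induction hr using Relation.ReflTransGen.head_induction_on with
    | refl => exact ⟨0, hk⟩
    | head h _ ih =>
      obtain ⟨m, hm⟩ := ih
      exact ⟨m + 1, Or.inr ⟨_, h, hm⟩⟩
  · rintro ⟨m, hm⟩
    induction m generalizing v with
    | zero => exact mem_anc_of_mem hm
    | succ m ih =>
      rcases hm with h | ⟨w, hw, hr⟩
      · exact mem_anc_of_mem h
      · exact anc_step hw (ih hr)

noncomputable def distK (E : Fin n → Fin n → Prop) (K : Set (Fin n)) (v : Fin n) : ℕ :=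
  sInf {m | reachN E K m v}

lemma dist_reach (h : v ∈ ancSet E K) : reachN E K (distK E K v) v :=
  Nat.sInf_mem (anc_iff_reachN.1 h)

lemma dist_le {m : ℕ} (h : reachN E K m v) : distK E K v ≤ m := Nat.sInf_le h

lemma dist_destruct (h : v ∈ ancSet E K) (hv : v ∉ K) :
    ∃ u, E v u ∧ u ∈ ancSet E K ∧ distK E K u < distK E K v := by
  have hr := dist_reach h
  rcases hm : distK E K v with _ | m
  · rw [hm] at hr
    exact absurd hr hv
  · rw [hm] at hr
    rcases hr with h' | ⟨u, hu, hru⟩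
    · exact absurd h' hv
    · exact ⟨u, hu, anc_iff_reachN.2 ⟨m, hru⟩, by
        have := dist_le hru
        omega⟩

lemma dist_step (h : E v w) (hw : w ∈ ancSet E K) :
    v ∈ ancSet E K ∧ distK E K v ≤ distK E K w + 1 :=
  ⟨anc_step h hw, dist_le (Or.inr ⟨w, h, dist_reach hw⟩)⟩

end Dist

/- ## the descent lemma -/

section Descent

variable {E F : Fin n → Fin n → Prop} {K : Set (Fin n)}

lemma descent (hE : ∀ i, ¬ Relation.TransGen E i i) (hF : ∀ i, ¬ Relation.TransGen F i i)
    (hskel : ∀ a b, adjP E a b ↔ adjP F a b)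
    (hUC : ∀ a b c, a ≠ c → ¬ adjP E a c → (colP E a b c ↔ colP F a b c)) :
    ∀ (r : ℕ) (b : Fin n), b ∈ ancSet E K → b ∉ K → b ∉ ancSet F K →
      distK E K b ≤ r →
      ∃ u, E b u ∧ F u b ∧ u ∈ ancSet E K ∧ distK E K u < distK E K b := by
  intro r
  induction r with
  | zero =>
    intro b hb hbK hbF hd
    have h0 : distK E K b = 0 := by omega
    have := dist_reach hb
    rw [h0] at this
    exact absurd this hbK
  | succ r ih =>
    intro b hb hbK hbF hd
    obtain ⟨u, hEbu, huanc, hdu⟩ := dist_destruct hb hbK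
    by_cases hFub : F u b
    · exact ⟨u, hEbu, hFub, huanc, hdu⟩
    · exfalso
      have hFbu : F b u := by
        rcases (hskel b u).1 (Or.inl hEbu) with h | h
        · exact h
        · exact absurd h hFub
      have huF : u ∉ ancSet F K := fun h => hbF (anc_step hFbu h)
      have huK : u ∉ K := fun h => huF (mem_anc_of_mem h)
      obtain ⟨w, hEuw, hFwu, hwanc, hdw⟩ := ih u huanc huK huF (by omega)
      have hbw : b ≠ w := by
        rintro rfl
        exact acy2 hE hEbu hEuw
      have hadj : adjP E b w := by
        by_contra hna
        have hcF : colP F b u w := ⟨hFbu, hFwu⟩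
        have hcE : colP E b u w := (hUC b u w hbw hna).2 hcF
        exact acy2 hE hEuw hcE.2
      rcases hadj with h | h
      · have := dist_step (K := K) h hwanc
        omega
      · exact acy3 hE hEbu hEuw h

lemma shield (hE : ∀ i, ¬ Relation.TransGen E i i) (hF : ∀ i, ¬ Relation.TransGen F i i)
    (hskel : ∀ a b, adjP E a b ↔ adjP F a b)
    (hUC : ∀ a b c, a ≠ c → ¬ adjP E a c → (colP E a b c ↔ colP F a b c))
    {a b u : Fin n} (hFab : F a b) (hEab : E a b) (hEbu : E b u) (hFub : F u b) :
    E a u := by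
  have hau : a ≠ u := by
    rintro rfl
    exact acy2 hE hEab hEbu
  have hadj : adjP E a u := by
    by_contra hna
    have hcF : colP F a b u := ⟨hFab, hFub⟩
    have hcE : colP E a b u := (hUC a b u hau hna).2 hcF
    exact acy2 hE hEbu hcE.2
  rcases hadj with h | h
  · exact h
  · exact absurd hEbu (acy3 hE h hEab)

end Descent

/- ## the transfer theorem -/

section Transfer

variable {E F : Fin n → Fin n → Prop} {K : Set (Fin n)}

theorem transfer (hE : ∀ i, ¬ Relation.TransGen E i i)
    (hF : ∀ i, ¬ Relation.TransGen F i i)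
    (hskel : ∀ a b, adjP E a b ↔ adjP F a b)
    (hUC : ∀ a b c, a ≠ c → ¬ adjP E a c → (colP E a b c ↔ colP F a b c)) :
    ∀ (N D : ℕ) (p : List (Fin n)) (i j : Fin n), p.length = N →
      (p.map (distK E K)).sum = D → connP E K p → p.head? = some i →
      p.getLast? = some j → i ≠ j → 2 ≤ p.length →
      ∃ q, connP F K q ∧ q.head? = some i ∧ q.getLast? = some j ∧ 2 ≤ q.length ∧
        (colliderCount E p ≤ 1 → colliderCount F q ≤ 1) := by
  intro N
  induction N using Nat.strong_induction_on with
  | _ N ihN =>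
  intro D
  induction D using Nat.strong_induction_on with
  | _ D ihD =>
  intro p i j hlen hDp hconn hhead hlast hij hlen2
  by_cases HV1 : ∃ (t : ℕ) (a b c : Fin n), p[t]? = some a ∧ p[t+1]? = some b ∧
      p[t+2]? = some c ∧ ¬ colP F a b c ∧ b ∈ K
  · -- V1: an F-non-collider in K; it is an E-collider; shielded shortcut
    obtain ⟨t, a, b, c, h1, h2, h3, hnF, hbK⟩ := HV1
    obtain ⟨L, R, hp, hLl⟩ := decomp_triple h1 h2 h3
    subst hp
    have htri := hconn.2
    have hTabc : triP E K a b c := htri t a b c h1 h2 h3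
    have hcolE : colP E a b c := by
      by_contra hnc
      exact (hTabc.2 hnc) hbK
    have hEab : E a b := hcolE.1
    have hEcb : E c b := hcolE.2
    by_cases hac : a = c
    · -- pattern L ++ a :: b :: a :: R, drop two
      subst hac
      have hLR : L ≠ [] ∨ R ≠ [] := by
        by_contra hcon
        push_neg at hcon
        obtain ⟨rfl, rfl⟩ := hcon
        simp at hhead hlast
        exact hij (by rw [← hhead, ← hlast])
      have hconn' : connP E K (L ++ a :: R) := by
        apply conn_drop2 hconn
        intro x y hLx hRy hold1 hold2
        constructor
        · intro _
          exact anc_edge_K hEab hbK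
        · intro _
          exact hold1.2 (fun hcol1 => acy2 hE hEab hcol1.2)
      have hhead' : (L ++ a :: R).head? = some i := by
        rw [head?_pres L a R (b :: a :: R)]
        exact hhead
      have hlast' : (L ++ a :: R).getLast? = some j := by
        rw [last?_pres L (last?_drop2 (b := b))]
        exact hlast
      have hlen' : (L ++ a :: R).length = N - 2 := by
        simp only [List.length_append, List.length_cons] at hlen ⊢
        omega
      have hNge : 4 ≤ N := by
        simp only [List.length_append, List.length_cons] at hlen
        rcases hLR with h | h
        · have : 1 ≤ L.length := List.length_pos_iff.2 h
          omega
        · have : 1 ≤ R.length := List.length_pos_iff.2 h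
          omega
      have hlen2' : 2 ≤ (L ++ a :: R).length := by omega
      obtain ⟨q, hq1, hq2, hq3, hq4, hq5⟩ := ihN (N - 2) (by omega)
        ((L ++ a :: R).map (distK E K)).sum (L ++ a :: R) i j hlen' rfl hconn'
        hhead' hlast' hij hlen2'
      refine ⟨q, hq1, hq2, hq3, hq4, ?_⟩
      intro hcnt
      apply hq5
      refine le_trans (count_drop2_le ?_) hcnt
      intro x y _ _ _
      exact Or.inr (Or.inl ⟨hEab, hEab⟩)
    · -- shielded; drop b
      have hadjEac : adjP E a c := by
        by_contra hna
        exact hnF ((hUC a b c hac hna).1 hcolE)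
      have hconn' : connP E K (L ++ a :: c :: R) := by
        apply conn_drop1 hconn hadjEac
        · intro x hLx hold
          constructor
          · intro _
            exact anc_edge_K hEab hbK
          · intro _
            exact hold.2 (fun hcol1 => acy2 hE hEab hcol1.2)
        · intro y hRy hold
          constructor
          · intro _
            exact anc_edge_K hEcb hbK
          · intro _
            exact hold.2 (fun hcol1 => acy2 hE hEcb hcol1.1)
      have hhead' : (L ++ a :: c :: R).head? = some i := by
        rw [head?_pres L a (c :: R) (b :: c :: R)]
        exact hhead
      have hlast' : (L ++ a :: c :: R).getLast? = some j := by
        rw [last?_pres L (last?_drop1 (b := b))]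
        exact hlast
      have hlen' : (L ++ a :: c :: R).length = N - 1 := by
        simp only [List.length_append, List.length_cons] at hlen ⊢
        omega
      have hNge : 3 ≤ N := by
        simp only [List.length_append, List.length_cons] at hlen
        omega
      have hlen2' : 2 ≤ (L ++ a :: c :: R).length := by omega
      obtain ⟨q, hq1, hq2, hq3, hq4, hq5⟩ := ihN (N - 1) (by omega)
        ((L ++ a :: c :: R).map (distK E K)).sum (L ++ a :: c :: R) i j hlen' rfl hconn'
        hhead' hlast' hij hlen2'
      refine ⟨q, hq1, hq2, hq3, hq4, ?_⟩
      intro hcnt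
      apply hq5
      apply count_drop1_one hcolE ?_ hcnt
      intro x y _ _ ⟨hc1, hc2⟩
      exact acy2 hE hc2.1 hc1.2
  · by_cases HV2 : ∃ (t : ℕ) (a b c : Fin n), p[t]? = some a ∧ p[t+1]? = some b ∧
        p[t+2]? = some c ∧ colP F a b c ∧ ¬ colP E a b c
    · -- V2': an F-collider that is an E-non-collider; shielded shortcut
      obtain ⟨t, a, b, c, h1, h2, h3, hcolF, hnE⟩ := HV2
      obtain ⟨L, R, hp, hLl⟩ := decomp_triple h1 h2 h3
      subst hp
      have htri := hconn.2
      have hwalk := hconn.1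
      have hadjab : adjP E a b := hwalk t a b h1 h2
      have hadjbc : adjP E b c := hwalk (t+1) b c h2 h3
      by_cases hac : a = c
      · -- pattern L ++ a :: b :: a :: R, drop two
        subst hac
        have hEba : E b a := by
          rcases hadjab with h | h
          · exact absurd ⟨h, h⟩ hnE
          · exact h
        have hLR : L ≠ [] ∨ R ≠ [] := by
          by_contra hcon
          push_neg at hcon
          obtain ⟨rfl, rfl⟩ := hcon
          simp at hhead hlast
          exact hij (by rw [← hhead, ← hlast])
        have hconn' : connP E K (L ++ a :: R) := by
          apply conn_drop2 hconn
          intro x y hLx hRy hold1 hold2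
          constructor
          · intro hnew
            exact hold1.1 ⟨hnew.1, hEba⟩
          · intro hnnew
            by_cases hxa : E x a
            · exact hold2.2 (fun hc => hnnew ⟨hxa, hc.2⟩)
            · exact hold1.2 (fun hc => hxa hc.1)
        have hhead' : (L ++ a :: R).head? = some i := by
          rw [head?_pres L a R (b :: a :: R)]
          exact hhead
        have hlast' : (L ++ a :: R).getLast? = some j := by
          rw [last?_pres L (last?_drop2 (b := b))]
          exact hlast
        have hlen' : (L ++ a :: R).length = N - 2 := by
          simp only [List.length_append, List.length_cons] at hlen ⊢
          omega
        have hNge : 4 ≤ N := by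
          simp only [List.length_append, List.length_cons] at hlen
          rcases hLR with h | h
          · have : 1 ≤ L.length := List.length_pos_iff.2 h
            omega
          · have : 1 ≤ R.length := List.length_pos_iff.2 h
            omega
        have hlen2' : 2 ≤ (L ++ a :: R).length := by omega
        obtain ⟨q, hq1, hq2, hq3, hq4, hq5⟩ := ihN (N - 2) (by omega)
          ((L ++ a :: R).map (distK E K)).sum (L ++ a :: R) i j hlen' rfl hconn'
          hhead' hlast' hij hlen2'
        refine ⟨q, hq1, hq2, hq3, hq4, ?_⟩
        intro hcnt
        apply hq5
        refine le_trans (count_drop2_le ?_) hcnt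
        intro x y _ _ hxy
        exact Or.inl ⟨hxy.1, hEba⟩
      · -- shielded; drop b
        have hadjEac : adjP E a c := by
          by_contra hna
          exact hnE ((hUC a b c hac hna).2 hcolF)
        have hconn' : connP E K (L ++ a :: c :: R) := by
          apply conn_drop1 hconn hadjEac
          · intro x hLx hold
            constructor
            · intro hnew
              rcases hadjab with hEab | hEba
              · have hEbc : E b c := by
                  rcases hadjbc with h | h
                  · exact h
                  · exact absurd ⟨hEab, h⟩ hnE
                exact absurd hnew.2 (acy3 hE hEab hEbc)
              · exact hold.1 ⟨hnew.1, hEba⟩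
            · intro hnnew haK
              rcases hadjab with hEab | hEba
              · exact hold.2 (fun hc => (acy2 hE hEab) hc.2) haK
              · by_cases hxa : E x a
                · obtain ⟨hL1, i1, i2, i3⟩ :=
                    idx_left (a := a) (b := b) (c := c) (R := R) hLx
                  exact HV1 ⟨L.length - 1, x, a, b, i1, i2, i3,
                    (fun hcF => acy2 hF hcolF.1 hcF.2), haK⟩
                · exact hold.2 (fun hc => hxa hc.1) haK
          · intro y hRy hold
            constructor
            · intro hnew
              rcases hadjbc with hEbc | hEcb
              · exact hold.1 ⟨hEbc, hnew.2⟩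
              · have hEba : E b a := by
                  rcases hadjab with h | h
                  · exact absurd ⟨h, hEcb⟩ hnE
                  · exact h
                exact absurd hEcb (acy3 hE hEba hnew.1)
            · intro hnnew hcK
              rcases hadjbc with hEbc | hEcb
              · by_cases hyc : E y c
                · obtain ⟨i1, i2, i3⟩ :=
                    idx_right (a := a) (b := b) (c := c) (L := L) hRy
                  exact HV1 ⟨L.length + 1, b, c, y, i1, i2, i3,
                    (fun hcF => acy2 hF hcolF.2 hcF.1), hcK⟩
                · exact hold.2 (fun hc => hyc hc.2) hcK
              · exact hold.2 (fun hc => acy2 hE hEcb hc.1) hcK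
        have hhead' : (L ++ a :: c :: R).head? = some i := by
          rw [head?_pres L a (c :: R) (b :: c :: R)]
          exact hhead
        have hlast' : (L ++ a :: c :: R).getLast? = some j := by
          rw [last?_pres L (last?_drop1 (b := b))]
          exact hlast
        have hlen' : (L ++ a :: c :: R).length = N - 1 := by
          simp only [List.length_append, List.length_cons] at hlen ⊢
          omega
        have hNge : 3 ≤ N := by
          simp only [List.length_append, List.length_cons] at hlen
          omega
        have hlen2' : 2 ≤ (L ++ a :: c :: R).length := by omega
        obtain ⟨q, hq1, hq2, hq3, hq4, hq5⟩ := ihN (N - 1) (by omega)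
          ((L ++ a :: c :: R).map (distK E K)).sum (L ++ a :: c :: R) i j hlen' rfl hconn'
          hhead' hlast' hij hlen2'
        refine ⟨q, hq1, hq2, hq3, hq4, ?_⟩
        intro hcnt
        apply hq5
        refine le_trans (count_drop1_le hnE ?_ ?_) hcnt
        · intro x hLx hnew
          rcases hadjab with hEab | hEba
          · have hEbc : E b c := by
              rcases hadjbc with h | h
              · exact h
              · exact absurd ⟨hEab, h⟩ hnE
            exact absurd hnew.2 (acy3 hE hEab hEbc)
          · exact ⟨hnew.1, hEba⟩
        · intro y hRy hnew
          rcases hadjbc with hEbc | hEcb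
          · exact ⟨hEbc, hnew.2⟩
          · have hEba : E b a := by
              rcases hadjab with h | h
              · exact absurd ⟨h, hEcb⟩ hnE
              · exact h
            exact absurd hEcb (acy3 hE hEba hnew.1)
    · by_cases HV3 : ∃ (t : ℕ) (a b c : Fin n), p[t]? = some a ∧ p[t+1]? = some b ∧
          p[t+2]? = some c ∧ colP F a b c ∧ b ∉ ancSet F K
      · -- V2b: an F-collider, E-collider, but not an F-ancestor of K: descend
        obtain ⟨t, a, b, c, h1, h2, h3, hcolF, hbF⟩ := HV3
        obtain ⟨L, R, hp, hLl⟩ := decomp_triple h1 h2 h3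
        subst hp
        have htri := hconn.2
        have hcolE : colP E a b c := by
          by_contra hnE
          exact HV2 ⟨t, a, b, c, h1, h2, h3, hcolF, hnE⟩
        have hTabc : triP E K a b c := htri t a b c h1 h2 h3
        have hbanc : b ∈ ancSet E K := hTabc.1 hcolE
        have hbK : b ∉ K := fun h => hbF (mem_anc_of_mem h)
        obtain ⟨u, hEbu, hFub, huanc, hdu⟩ :=
          descent (K := K) hE hF hskel hUC (distK E K b) b hbanc hbK hbF (le_refl _)
        have hEau : E a u := shield hE hF hskel hUC hcolF.1 hcolE.1 hEbu hFub
        have hEcu : E c u := shield hE hF hskel hUC hcolF.2 hcolE.2 hEbu hFub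
        have hconn' : connP E K (L ++ a :: u :: c :: R) := by
          apply conn_repl hconn (Or.inl hEau) (Or.inr hEcu)
          · exact ⟨fun _ => huanc, fun hn => absurd ⟨hEau, hEcu⟩ hn⟩
          · intro x hLx hold
            exact ⟨fun hnew => absurd hnew.2 (acy2 hE hEau),
              fun _ => hold.2 (fun hc => acy2 hE hcolE.1 hc.2)⟩
          · intro y hRy hold
            exact ⟨fun hnew => absurd hnew.1 (acy2 hE hEcu),
              fun _ => hold.2 (fun hc => acy2 hE hcolE.2 hc.1)⟩
        have hhead' : (L ++ a :: u :: c :: R).head? = some i := by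
          rw [head?_pres L a (u :: c :: R) (b :: c :: R)]
          exact hhead
        have hlast' : (L ++ a :: u :: c :: R).getLast? = some j := by
          rw [last?_pres L (last?_repl (b := b))]
          exact hlast
        have hlen' : (L ++ a :: u :: c :: R).length = N := by
          simp only [List.length_append, List.length_cons] at hlen ⊢
          omega
        have hlen2' : 2 ≤ (L ++ a :: u :: c :: R).length := by omega
        have hDlt : ((L ++ a :: u :: c :: R).map (distK E K)).sum < D := by
          rw [← hDp]
          simp only [List.map_append, List.sum_append, List.map_cons, List.sum_cons]
          omega
        obtain ⟨q, hq1, hq2, hq3, hq4, hq5⟩ := ihD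
          ((L ++ a :: u :: c :: R).map (distK E K)).sum hDlt
          (L ++ a :: u :: c :: R) i j hlen' rfl hconn' hhead' hlast' hij hlen2'
        refine ⟨q, hq1, hq2, hq3, hq4, ?_⟩
        intro hcnt
        apply hq5
        refine le_trans (count_repl_le (fun _ => hcolE) ?_ ?_) hcnt
        · exact fun x hLx hnew => absurd hnew.2 (acy2 hE hEau)
        · exact fun y hRy hnew => absurd hnew.1 (acy2 hE hEcu)
      · -- no violations: p itself works in F
        refine ⟨p, ⟨?_, ?_⟩, hhead, hlast, hlen2, ?_⟩
        · intro t x y h1 h2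
          exact (hskel x y).1 (hconn.1 t x y h1 h2)
        · intro t x y z h1 h2 h3
          constructor
          · intro hcf
            by_contra hna
            exact HV3 ⟨t, x, y, z, h1, h2, h3, hcf, hna⟩
          · intro hncf
            intro hyK
            exact HV1 ⟨t, x, y, z, h1, h2, h3, hncf, hyK⟩
        · intro hle
          refine le_trans (count_le_count_of_imp ?_) hle
          intro t x y z h1 h2 h3 hcf
          by_contra hna
          exact HV2 ⟨t, x, y, z, h1, h2, h3, hcf, hna⟩

end Transfer

/- ## separation of non-adjacent vertices by ancestors -/

section SepAnc

variable {E : Fin n → Fin n → Prop} {K : Set (Fin n)}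

lemma conn_tail {x : Fin n} {p : List (Fin n)} (h : connP E K (x :: p)) :
    connP E K p := by
  obtain ⟨hw, ht⟩ := h
  constructor
  · intro t a b h1 h2
    exact hw (t+1) a b (by simpa using h1) (by simpa using h2)
  · intro t a b c h1 h2 h3
    exact ht (t+1) a b c (by simpa using h1) (by simpa using h2) (by simpa using h3)

lemma S1 : ∀ (p : List (Fin n)) (v w : Fin n), connP E K (v :: w :: p) → E v w →
    ∀ e, (v :: w :: p).getLast? = some e → v ∈ ancSet E (insert e K) := by
  intro p
  induction p with
  | nil =>
    intro v w hconn hvw e hlaste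
    have : w = e := by simpa using hlaste
    subst this
    exact ⟨w, Set.mem_insert w K, Relation.ReflTransGen.single hvw⟩
  | cons z p' ih =>
    intro v w hconn hvw e hlaste
    have htri : triP E K v w z := hconn.2 0 v w z (by simp) (by simp) (by simp)
    by_cases hcol : colP E v w z
    · have hw : w ∈ ancSet E K := htri.1 hcol
      exact anc_step hvw (anc_mono (Set.subset_insert e K) hw)
    · have hnzw : ¬ E z w := fun h => hcol ⟨hvw, h⟩
      have hEwz : E w z := (hconn.1 1 w z (by simp) (by simp)).resolve_right hnzw
      have hlaste' : (w :: z :: p').getLast? = some e := by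
        rw [← List.getLast?_cons_cons]
        exact hlaste
      have := ih w z (conn_tail hconn) hEwz e hlaste'
      exact anc_step hvw this

lemma sep_anc (hE : ∀ i, ¬ Relation.TransGen E i i) {a b : Fin n} (hne : a ≠ b)
    (hnadj : ¬ adjP E a b) :
    ∀ (N : ℕ) (p : List (Fin n)), p.length = N →
      connP E (ancSet E {a, b} \ {a, b}) p → p.head? = some a →
      p.getLast? = some b → 2 ≤ p.length → False := by
  set K₀ : Set (Fin n) := ancSet E {a, b} \ {a, b} with hK₀
  have hK₀sub : ancSet E K₀ ⊆ ancSet E {a, b} :=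
    anc_sub_of_sub (fun k hk => hk.1)
  intro N
  induction N using Nat.strong_induction_on with
  | _ N ihN =>
  intro p hlen hconn hhead hlast hlen2
  rcases p with _ | ⟨a', p₁⟩
  · simp at hlen2
  rcases p₁ with _ | ⟨v, rest⟩
  · simp at hlen2
  · obtain rfl : a = a' := by
      have : a' = a := by simpa using hhead
      exact this.symm
    by_cases hva : v = a
    · subst hva
      cases rest with
      | nil =>
        have : adjP E v v := hconn.1 0 v v (by simp) (by simp)
        rcases this with h | h <;> exact acy_irrefl hE h
      | cons z rest' =>
        exact ihN (v :: z :: rest').length (by simp at hlen ⊢; omega) _ rfl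
          (conn_tail hconn) (by simp)
          (by rw [← List.getLast?_cons_cons]; exact hlast) (by simp)
    · by_cases hvb : v = b
      · subst hvb
        exact hnadj (hconn.1 0 a v (by simp) (by simp))
      · -- v not an endpoint
        cases rest with
        | nil =>
          have : v = b := by simpa using hlast
          exact hvb this
        | cons z rest' =>
          have htri0 : triP E K₀ a v z := hconn.2 0 a v z (by simp) (by simp) (by simp)
          by_cases hcol : colP E a v z
          · have hvanc : v ∈ ancSet E K₀ := htri0.1 hcol
            obtain ⟨k, hk, hr⟩ := hK₀sub hvanc
            simp only [Set.mem_insert_iff, Set.mem_singleton_iff] at hk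
            rcases hk with hk | hk
            · exact acy_rt hE hcol.1 (hk ▸ hr)
            · -- v has a directed path to b
              by_cases hzb : z = b
              · subst hzb
                exact acy_rt hE hcol.2 (hk ▸ hr)
              · by_cases hza : z = a
                · subst hza
                  cases rest' with
                  | nil =>
                    have : z = b := by simpa using hlast
                    exact hne this
                  | cons w rest'' =>
                    exact ihN (z :: w :: rest'').length (by simp at hlen ⊢; omega) _ rfl
                      (conn_tail (conn_tail hconn)) (by simp)
                      (by rw [← List.getLast?_cons_cons, ← List.getLast?_cons_cons]
                          exact hlast) (by simp)
                · cases rest' with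
                  | nil =>
                    have : z = b := by simpa using hlast
                    exact hzb this
                  | cons w rest'' =>
                    have htri1 : triP E K₀ v z w :=
                      hconn.2 1 v z w (by simp) (by simp) (by simp)
                    have hnc1 : ¬ colP E v z w :=
                      fun h => acy2 hE hcol.2 h.1
                    have hzK : z ∉ K₀ := htri1.2 hnc1
                    apply hzK
                    refine ⟨anc_step hcol.2 (hK₀sub hvanc), ?_⟩
                    intro hmem
                    rcases hmem with rfl | rfl
                    · exact hza rfl
                    · exact hzb rfl
          · have hvnK : v ∉ K₀ := htri0.2 hcol
            by_cases hEva : E v a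
            · apply hvnK
              refine ⟨⟨a, by simp, Relation.ReflTransGen.single hEva⟩, ?_⟩
              intro hmem
              rcases hmem with rfl | rfl
              · exact hva rfl
              · exact hvb rfl
            · have hEav : E a v :=
                (hconn.1 0 a v (by simp) (by simp)).resolve_right hEva
              have hnzv : ¬ E z v := fun h => hcol ⟨hEav, h⟩
              have hEvz : E v z :=
                (hconn.1 1 v z (by simp) (by simp)).resolve_right hnzv
              have hlast' : (v :: z :: rest').getLast? = some b := by
                rw [← List.getLast?_cons_cons]
                exact hlast
              have hvm := S1 rest' v z (conn_tail hconn) hEvz b hlast'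
              have hsub : ancSet E (insert b K₀) ⊆ ancSet E {a, b} := by
                apply anc_sub_of_sub
                intro k hk
                rcases hk with rfl | hk
                · exact mem_anc_of_mem (by simp)
                · exact hk.1
              apply hvnK
              refine ⟨hsub hvm, ?_⟩
              intro hmem
              rcases hmem with rfl | rfl
              · exact hva rfl
              · exact hvb rfl

end SepAnc

/- ## bridges to DConn / StarConn -/

section Bridge2

variable {E F : Fin n → Fin n → Prop} {K : Set (Fin n)} {a b c i j : Fin n}

lemma dConn_iff : DConn E K i j ↔ ∃ p : List (Fin n), p.head? = some i ∧
    p.getLast? = some j ∧ 2 ≤ p.length ∧ connP E K p := by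
  unfold DConn
  refine exists_congr fun p => ?_
  rw [dConnecting_iff]

lemma starConn_iff : StarConn E K i j ↔ ∃ p : List (Fin n), p.head? = some i ∧
    p.getLast? = some j ∧ 2 ≤ p.length ∧ connP E K p ∧ colliderCount E p ≤ 1 := by
  unfold StarConn StarConnecting
  refine exists_congr fun p => ?_
  rw [dConnecting_iff]

lemma walkAll_pair (h : adjP E a b) : walkAll E [a, b] := by
  intro t x y hx hy
  rcases t with _ | _ | t
  · obtain rfl : a = x := by simpa using hx
    obtain rfl : b = y := by simpa using hy
    exact h
  · simp at hy
  · simp at hx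

lemma triAll_pair : triAll E K [a, b] := by
  intro t x y z h1 h2 h3
  rcases t with _ | t <;> simp at h3

lemma walkAll_three (h1 : adjP E a b) (h2 : adjP E b c) : walkAll E [a, b, c] := by
  intro t x y hx hy
  rcases t with _ | _ | _ | t
  · obtain rfl : a = x := by simpa using hx
    obtain rfl : b = y := by simpa using hy
    exact h1
  · obtain rfl : b = x := by simpa using hx
    obtain rfl : c = y := by simpa using hy
    exact h2
  · simp at hy
  · simp at hx

lemma triAll_three (h : triP E K a b c) : triAll E K [a, b, c] := by
  intro t x y z h1 h2 h3
  rcases t with _ | t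
  · obtain rfl : a = x := by simpa using h1
    obtain rfl : b = y := by simpa using h2
    obtain rfl : c = z := by simpa using h3
    exact h
  · rcases t with _ | t <;> simp at h3

lemma starConn_of_adj (hadj : adjP E a b) (K : Set (Fin n)) : StarConn E K a b := by
  rw [starConn_iff]
  exact ⟨[a, b], rfl, rfl, by simp, ⟨walkAll_pair hadj, triAll_pair⟩, by
    rw [count_two]; omega⟩

lemma starConn_three (h1 : adjP E a b) (h2 : adjP E b c) (h : triP E K a b c) :
    StarConn E K a c := by
  rw [starConn_iff]
  refine ⟨[a, b, c], rfl, rfl, by simp, ⟨walkAll_three h1 h2, triAll_three h⟩, ?_⟩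
  rw [count_cons₃, count_two]
  split <;> omega

lemma dConn_of_starConn (h : StarConn E K i j) : DConn E K i j := by
  obtain ⟨p, h1, h2, h3, h4⟩ := h
  exact ⟨p, h1, h2, h3, h4.1⟩

lemma not_dConn_of_nonadj (hE : ∀ i, ¬ Relation.TransGen E i i) (hne : a ≠ b)
    (hnadj : ¬ adjP E a b) : ¬ DConn E (ancSet E {a, b} \ {a, b}) a b := by
  intro hd
  obtain ⟨p, h1, h2, h3, h4⟩ := dConn_iff.1 hd
  exact sep_anc hE hne hnadj p.length p rfl h4 h1 h2 h3

lemma starSep_single_iff : StarSep E {a} {b} K ↔ ¬ StarConn E K a b := by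
  constructor
  · intro h
    exact h a rfl b rfl
  · intro h x hx y hy
    obtain rfl : x = a := hx
    obtain rfl : y = b := hy
    exact h

lemma dSep_single_iff : DSep E {a} {b} K ↔ ¬ DConn E K a b := by
  constructor
  · intro h
    exact h a rfl b rfl
  · intro h x hx y hy
    obtain rfl : x = a := hx
    obtain rfl : y = b := hy
    exact h

end Bridge2

/- ## extraction of skeleton and colliders from separation agreement -/

section Extract

variable {E F : Fin n → Fin n → Prop}

/-- pair-version of the star-separation agreement -/
def PairStar (E F : Fin n → Fin n → Prop) : Prop :=
  ∀ (K : Set (Fin n)) (x y : Fin n), x ≠ y → x ∉ K → y ∉ K →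
    (StarSep E {x} {y} K ↔ StarSep F {x} {y} K)

def PairD (E F : Fin n → Fin n → Prop) : Prop :=
  ∀ (K : Set (Fin n)) (x y : Fin n), x ≠ y → x ∉ K → y ∉ K →
    (DSep E {x} {y} K ↔ DSep F {x} {y} K)

lemma adjP_ne (hE : ∀ i, ¬ Relation.TransGen E i i) {a b : Fin n}
    (h : adjP E a b) : a ≠ b := by
  rcases h with h | h
  · exact acy_ne hE h
  · exact (acy_ne hE h).symm

lemma adj_transfer_star (hE : ∀ i, ¬ Relation.TransGen E i i)
    (hF : ∀ i, ¬ Relation.TransGen F i i) (hss : PairStar E F)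
    {a b : Fin n} (hadj : adjP E a b) : adjP F a b := by
  have hne : a ≠ b := adjP_ne hE hadj
  by_contra hnadjF
  set K₀ : Set (Fin n) := ancSet F {a, b} \ {a, b} with hK₀
  have haK : a ∉ K₀ := fun h => h.2 (by simp)
  have hbK : b ∉ K₀ := fun h => h.2 (by simp)
  have hSE : ¬ StarSep E {a} {b} K₀ := by
    rw [starSep_single_iff, not_not]
    exact starConn_of_adj hadj K₀
  have hSF : ¬ StarSep F {a} {b} K₀ := fun h => hSE ((hss K₀ a b hne haK hbK).2 h)
  rw [starSep_single_iff, not_not] at hSF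
  exact not_dConn_of_nonadj hF hne hnadjF (dConn_of_starConn hSF)

lemma adj_transfer_d (hE : ∀ i, ¬ Relation.TransGen E i i)
    (hF : ∀ i, ¬ Relation.TransGen F i i) (hss : PairD E F)
    {a b : Fin n} (hadj : adjP E a b) : adjP F a b := by
  have hne : a ≠ b := adjP_ne hE hadj
  by_contra hnadjF
  set K₀ : Set (Fin n) := ancSet F {a, b} \ {a, b} with hK₀
  have haK : a ∉ K₀ := fun h => h.2 (by simp)
  have hbK : b ∉ K₀ := fun h => h.2 (by simp)
  have hSE : ¬ DSep E {a} {b} K₀ := by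
    rw [dSep_single_iff, not_not]
    exact dConn_of_starConn (starConn_of_adj hadj K₀)
  have hSF : ¬ DSep F {a} {b} K₀ := fun h => hSE ((hss K₀ a b hne haK hbK).2 h)
  rw [dSep_single_iff, not_not] at hSF
  exact not_dConn_of_nonadj hF hne hnadjF hSF

lemma col_b_notin (hE : ∀ i, ¬ Relation.TransGen E i i) {a b c : Fin n}
    (hcolE : colP E a b c) : b ∉ ancSet E {a, c} \ ({a, c} : Set (Fin n)) := by
  intro hmem
  obtain ⟨⟨k, hk, hr⟩, _⟩ := hmem
  simp only [Set.mem_insert_iff, Set.mem_singleton_iff] at hk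
  rcases hk with hk | hk
  · exact acy_rt hE hcolE.1 (hk ▸ hr)
  · exact acy_rt hE hcolE.2 (hk ▸ hr)

lemma uc_transfer_star (hE : ∀ i, ¬ Relation.TransGen E i i)
    (hF : ∀ i, ¬ Relation.TransGen F i i)
    (hskel : ∀ a b, adjP E a b ↔ adjP F a b) (hss : PairStar E F)
    {a b c : Fin n} (hne : a ≠ c) (hnadj : ¬ adjP E a c) (hcolE : colP E a b c) :
    colP F a b c := by
  by_contra hnF
  set K₁ : Set (Fin n) := ancSet E {a, c} \ {a, c} with hK₁
  have haK : a ∉ K₁ := fun h => h.2 (by simp)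
  have hcK : c ∉ K₁ := fun h => h.2 (by simp)
  have hbK : b ∉ K₁ := col_b_notin hE hcolE
  have hadjFab : adjP F a b := (hskel a b).1 (Or.inl hcolE.1)
  have hadjFbc : adjP F b c := (hskel b c).1 (Or.inr hcolE.2)
  have hSF : ¬ StarSep F {a} {c} K₁ := by
    rw [starSep_single_iff, not_not]
    exact starConn_three hadjFab hadjFbc
      ⟨fun hcf => absurd hcf hnF, fun _ => hbK⟩
  have hSE : ¬ StarSep E {a} {c} K₁ := fun h => hSF ((hss K₁ a c hne haK hcK).1 h)
  rw [starSep_single_iff, not_not] at hSE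
  exact not_dConn_of_nonadj hE hne hnadj (dConn_of_starConn hSE)

lemma uc_transfer_d (hE : ∀ i, ¬ Relation.TransGen E i i)
    (hF : ∀ i, ¬ Relation.TransGen F i i)
    (hskel : ∀ a b, adjP E a b ↔ adjP F a b) (hss : PairD E F)
    {a b c : Fin n} (hne : a ≠ c) (hnadj : ¬ adjP E a c) (hcolE : colP E a b c) :
    colP F a b c := by
  by_contra hnF
  set K₁ : Set (Fin n) := ancSet E {a, c} \ {a, c} with hK₁
  have haK : a ∉ K₁ := fun h => h.2 (by simp)
  have hcK : c ∉ K₁ := fun h => h.2 (by simp)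
  have hbK : b ∉ K₁ := col_b_notin hE hcolE
  have hadjFab : adjP F a b := (hskel a b).1 (Or.inl hcolE.1)
  have hadjFbc : adjP F b c := (hskel b c).1 (Or.inr hcolE.2)
  have hSF : ¬ DSep F {a} {c} K₁ := by
    rw [dSep_single_iff, not_not]
    exact dConn_of_starConn (starConn_three hadjFab hadjFbc
      ⟨fun hcf => absurd hcf hnF, fun _ => hbK⟩)
  have hSE : ¬ DSep E {a} {c} K₁ := fun h => hSF ((hss K₁ a c hne haK hcK).1 h)
  rw [dSep_single_iff, not_not] at hSE
  exact not_dConn_of_nonadj hE hne hnadj hSE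

end Extract

/- ## connection transfer given skeleton and colliders -/

section ConnTransfer

variable {E F : Fin n → Fin n → Prop}

lemma dConn_transfer (hE : ∀ i, ¬ Relation.TransGen E i i)
    (hF : ∀ i, ¬ Relation.TransGen F i i)
    (hskel : ∀ a b, adjP E a b ↔ adjP F a b)
    (hUC : ∀ a b c, a ≠ c → ¬ adjP E a c → (colP E a b c ↔ colP F a b c))
    {K : Set (Fin n)} {i j : Fin n} (hij : i ≠ j) (h : DConn E K i j) :
    DConn F K i j := by
  obtain ⟨p, h1, h2, h3, h4⟩ := dConn_iff.1 h
  obtain ⟨q, hq1, hq2, hq3, hq4, _⟩ :=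
    transfer (K := K) hE hF hskel hUC p.length (p.map (distK E K)).sum p i j rfl rfl
      h4 h1 h2 hij h3
  exact dConn_iff.2 ⟨q, hq2, hq3, hq4, hq1⟩

lemma starConn_transfer (hE : ∀ i, ¬ Relation.TransGen E i i)
    (hF : ∀ i, ¬ Relation.TransGen F i i)
    (hskel : ∀ a b, adjP E a b ↔ adjP F a b)
    (hUC : ∀ a b c, a ≠ c → ¬ adjP E a c → (colP E a b c ↔ colP F a b c))
    {K : Set (Fin n)} {i j : Fin n} (hij : i ≠ j) (h : StarConn E K i j) :
    StarConn F K i j := by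
  obtain ⟨p, h1, h2, h3, h4, h5⟩ := starConn_iff.1 h
  obtain ⟨q, hq1, hq2, hq3, hq4, hq5⟩ :=
    transfer (K := K) hE hF hskel hUC p.length (p.map (distK E K)).sum p i j rfl rfl
      h4 h1 h2 hij h3
  exact starConn_iff.2 ⟨q, hq2, hq3, hq4, hq1, hq5 h5⟩

end ConnTransfer


end MarkovStar

open MarkovStar in
/-- Two DAGs `E` and `F` on `[n]` are Markov equivalent under the
*-separation criterion if and only if they are Markov equivalent under the
d-separation criterion. -/
theorem markov_equivalence_star_iff_d {n : ℕ} (E F : Fin n → Fin n → Prop)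
    (hE : ∀ i, ¬ Relation.TransGen E i i) (hF : ∀ i, ¬ Relation.TransGen F i i) :
    (∀ I J K : Set (Fin n), I.Nonempty → J.Nonempty →
        Disjoint I J → Disjoint I K → Disjoint J K →
        (StarSep E I J K ↔ StarSep F I J K)) ↔
    (∀ I J K : Set (Fin n), I.Nonempty → J.Nonempty →
        Disjoint I J → Disjoint I K → Disjoint J K →
        (DSep E I J K ↔ DSep F I J K)) := by
  constructor
  · intro hstar
    have hss : PairStar E F := by
      intro K x y hxy hx hy
      exact hstar {x} {y} K ⟨x, rfl⟩ ⟨y, rfl⟩ (by simpa using hxy)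
        (by simpa using hx) (by simpa using hy)
    have hssSymm : PairStar F E := fun K x y h1 h2 h3 => (hss K x y h1 h2 h3).symm
    have hskel : ∀ a b, adjP E a b ↔ adjP F a b := fun a b =>
      ⟨adj_transfer_star hE hF hss, adj_transfer_star hF hE hssSymm⟩
    have hskelSymm : ∀ a b, adjP F a b ↔ adjP E a b := fun a b => (hskel a b).symm
    have hUC : ∀ a b c, a ≠ c → ¬ adjP E a c → (colP E a b c ↔ colP F a b c) := by
      intro a b c hne hnadj
      constructor
      · exact uc_transfer_star hE hF hskel hss hne hnadj
      · exact uc_transfer_star hF hE hskelSymm hssSymm hne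
          (fun h => hnadj ((hskel a c).2 h))
    have hUCSymm : ∀ a b c, a ≠ c → ¬ adjP F a c → (colP F a b c ↔ colP E a b c) :=
      fun a b c hne hnadj => (hUC a b c hne (fun h => hnadj ((hskel a c).1 h))).symm
    intro I J K hI hJ hIJ hIK hJK
    constructor
    · intro hsep i hi j hj hconn
      have hij : i ≠ j := fun h => Set.disjoint_left.1 hIJ hi (h ▸ hj)
      exact hsep i hi j hj (dConn_transfer hF hE hskelSymm hUCSymm hij hconn)
    · intro hsep i hi j hj hconn
      have hij : i ≠ j := fun h => Set.disjoint_left.1 hIJ hi (h ▸ hj)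
      exact hsep i hi j hj (dConn_transfer hE hF hskel hUC hij hconn)
  · intro hd
    have hss : PairD E F := by
      intro K x y hxy hx hy
      exact hd {x} {y} K ⟨x, rfl⟩ ⟨y, rfl⟩ (by simpa using hxy)
        (by simpa using hx) (by simpa using hy)
    have hssSymm : PairD F E := fun K x y h1 h2 h3 => (hss K x y h1 h2 h3).symm
    have hskel : ∀ a b, adjP E a b ↔ adjP F a b := fun a b =>
      ⟨adj_transfer_d hE hF hss, adj_transfer_d hF hE hssSymm⟩
    have hskelSymm : ∀ a b, adjP F a b ↔ adjP E a b := fun a b => (hskel a b).symm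
    have hUC : ∀ a b c, a ≠ c → ¬ adjP E a c → (colP E a b c ↔ colP F a b c) := by
      intro a b c hne hnadj
      constructor
      · exact uc_transfer_d hE hF hskel hss hne hnadj
      · exact uc_transfer_d hF hE hskelSymm hssSymm hne
          (fun h => hnadj ((hskel a c).2 h))
    have hUCSymm : ∀ a b c, a ≠ c → ¬ adjP F a c → (colP F a b c ↔ colP E a b c) :=
      fun a b c hne hnadj => (hUC a b c hne (fun h => hnadj ((hskel a c).1 h))).symm
    intro I J K hI hJ hIJ hIK hJK
    constructor
    · intro hsep i hi j hj hconn
      have hij : i ≠ j := fun h => Set.disjoint_left.1 hIJ hi (h ▸ hj)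
      exact hsep i hi j hj (starConn_transfer hF hE hskelSymm hUCSymm hij hconn)
    · intro hsep i hi j hj hconn
      have hij : i ≠ j := fun h => Set.disjoint_left.1 hIJ hi (h ▸ hj)
      exact hsep i hi j hj (starConn_transfer hE hF hskel hUC hij hconn)
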